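/- Let z : X^n → ℂ with Σ_k |z_k|² = 1 be the coefficients of a state of n qubits in the computational basis, where X = {0,1}, and let A ⊆ {1,…,n}. Then the purity of the reduced state on the qubits in A equals π_A(z) = Σ_{k,h ∈ X^n} z_k · z_{k⊕h} · conj(z_{k⊕h_A}) · conj(z_{k⊕h_Ā}), where ⊕ is bitwise XOR, h_A is h with all components outside A set to 0, and h_Ā is h with all components inside A set to 0. -/

import Mathlib

open Finset

/-- Reduced density matrix of an `n`-qubit pure state (with coefficients `z` in the
computational basis, qubits labelled by `Fin n` and basis elements by `Fin n → Bool`)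
on the subset `A` of qubits. -/
noncomputable def rhoQ (n : ℕ) (A : Finset (Fin n)) (z : (Fin n → Bool) → ℂ) :
    Matrix ({i // i ∈ A} → Bool) ({i // i ∈ A} → Bool) ℂ :=
  fun ℓ ℓ' => ∑ m : {i // i ∉ A} → Bool,
    z (fun i => if h : i ∈ A then ℓ ⟨i, h⟩ else m ⟨i, h⟩) *
      star (z (fun i => if h : i ∈ A then ℓ' ⟨i, h⟩ else m ⟨i, h⟩))

def glue (n : ℕ) (A : Finset (Fin n)) (ℓ : {i // i ∈ A} → Bool)
    (m : {i // i ∉ A} → Bool) : Fin n → Bool :=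
  fun i => if h : i ∈ A then ℓ ⟨i, h⟩ else m ⟨i, h⟩

def splitEquiv (n : ℕ) (A : Finset (Fin n)) :
    ({i // i ∈ A} → Bool) × ({i // i ∉ A} → Bool) ≃ (Fin n → Bool) where
  toFun p := glue n A p.1 p.2
  invFun k := (fun i => k i, fun i => k i)
  left_inv := fun ⟨ℓ, m⟩ => by
    refine Prod.ext ?_ ?_ <;> funext i
    · simp [glue, i.2]
    · simp [glue, i.2]
  right_inv k := by
    funext i; unfold glue; by_cases h : i ∈ A <;> simp [h]

def xorEquiv (n : ℕ) (k : Fin n → Bool) : (Fin n → Bool) ≃ (Fin n → Bool) where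
  toFun h := fun i => Bool.xor (k i) (h i)
  invFun h := fun i => Bool.xor (k i) (h i)
  left_inv h := by funext i; simp
  right_inv h := by funext i; simp


/-- Fourier (XOR) expression of the purity of a subset `A` of qubits:
`Tr(ρ_A²) = ∑_{k,h} z_k z_{k⊕h} conj(z_{k⊕h_A}) conj(z_{k⊕h_Ā})`,
where `h_A` is `h` with components outside `A` set to `0` and
`h_Ā` is `h` with components inside `A` set to `0`. -/
theorem purity_xor_form (n : ℕ) (A : Finset (Fin n)) (z : (Fin n → Bool) → ℂ)
    (hz : ∑ k : Fin n → Bool, ‖z k‖ ^ 2 = 1) :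
    Matrix.trace (rhoQ n A z ^ 2) =
      ∑ k : Fin n → Bool, ∑ h : Fin n → Bool,
        z k * z (fun i => Bool.xor (k i) (h i)) *
          star (z (fun i => Bool.xor (k i) (if i ∈ A then h i else false))) *
          star (z (fun i => Bool.xor (k i) (if i ∈ A then false else h i))) := by
  have step1 : ∀ k : Fin n → Bool,
      (∑ h : Fin n → Bool, z k * z (fun i => Bool.xor (k i) (h i)) *
          star (z (fun i => Bool.xor (k i) (if i ∈ A then h i else false))) *
          star (z (fun i => Bool.xor (k i) (if i ∈ A then false else h i)))) =
      ∑ k' : Fin n → Bool, z k * z k' *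
          star (z (fun i => if i ∈ A then k' i else k i)) *
          star (z (fun i => if i ∈ A then k i else k' i)) := by
    intro k
    refine (Fintype.sum_equiv (xorEquiv n k) _ _ fun h => ?_).symm
    have e1 : (fun i => Bool.xor (k i) ((xorEquiv n k) h i)) = h := by
      funext i; simp [xorEquiv]
    have e2 : (fun i => Bool.xor (k i) (if i ∈ A then (xorEquiv n k) h i else false))
        = fun i => if i ∈ A then h i else k i := by
      funext i; by_cases hi : i ∈ A <;> simp [xorEquiv, hi]
    have e3 : (fun i => Bool.xor (k i) (if i ∈ A then false else (xorEquiv n k) h i))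
        = fun i => if i ∈ A then k i else h i := by
      funext i; by_cases hi : i ∈ A <;> simp [xorEquiv, hi]
    rw [e1, e2, e3]
  have step2 : (∑ k : Fin n → Bool, ∑ k' : Fin n → Bool, z k * z k' *
          star (z (fun i => if i ∈ A then k' i else k i)) *
          star (z (fun i => if i ∈ A then k i else k' i))) =
      ∑ ℓ : {i // i ∈ A} → Bool, ∑ m : {i // i ∉ A} → Bool,
        ∑ ℓ' : {i // i ∈ A} → Bool, ∑ m' : {i // i ∉ A} → Bool,
          z (glue n A ℓ m) * z (glue n A ℓ' m') *
            star (z (glue n A ℓ' m)) * star (z (glue n A ℓ m')) := by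
    have key : ∀ (ℓ ℓ' : {i // i ∈ A} → Bool) (m m' : {i // i ∉ A} → Bool),
        z (glue n A ℓ m) * z (glue n A ℓ' m') *
          star (z (fun i => if i ∈ A then glue n A ℓ' m' i else glue n A ℓ m i)) *
          star (z (fun i => if i ∈ A then glue n A ℓ m i else glue n A ℓ' m' i)) =
        z (glue n A ℓ m) * z (glue n A ℓ' m') *
          star (z (glue n A ℓ' m)) * star (z (glue n A ℓ m')) := by
      intro ℓ ℓ' m m'
      have e1 : (fun i => if i ∈ A then glue n A ℓ' m' i else glue n A ℓ m i)
          = glue n A ℓ' m := by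
        funext i; by_cases hi : i ∈ A <;> simp [glue, hi]
      have e2 : (fun i => if i ∈ A then glue n A ℓ m i else glue n A ℓ' m' i)
          = glue n A ℓ m' := by
        funext i; by_cases hi : i ∈ A <;> simp [glue, hi]
      rw [e1, e2]
    calc (∑ k : Fin n → Bool, ∑ k' : Fin n → Bool, z k * z k' *
            star (z (fun i => if i ∈ A then k' i else k i)) *
            star (z (fun i => if i ∈ A then k i else k' i)))
        = ∑ p : ({i // i ∈ A} → Bool) × ({i // i ∉ A} → Bool),
            ∑ q : ({i // i ∈ A} → Bool) × ({i // i ∉ A} → Bool),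
            z (glue n A p.1 p.2) * z (glue n A q.1 q.2) *
              star (z (glue n A q.1 p.2)) * star (z (glue n A p.1 q.2)) := by
          refine (Fintype.sum_equiv (splitEquiv n A) _ _ fun p => ?_).symm
          refine Fintype.sum_equiv (splitEquiv n A) _ _ fun q => ?_
          exact (key p.1 q.1 p.2 q.2).symm
      _ = _ := by
          simp only [Fintype.sum_prod_type]
  have lhs : Matrix.trace (rhoQ n A z ^ 2) =
      ∑ ℓ : {i // i ∈ A} → Bool, ∑ ℓ' : {i // i ∈ A} → Bool,
        ∑ m : {i // i ∉ A} → Bool, ∑ m' : {i // i ∉ A} → Bool,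
          (z (glue n A ℓ m) * star (z (glue n A ℓ' m))) *
            (z (glue n A ℓ' m') * star (z (glue n A ℓ m'))) := by
    rw [pow_two, Matrix.trace]
    refine Finset.sum_congr rfl fun ℓ _ => ?_
    rw [Matrix.diag_apply, Matrix.mul_apply]
    refine Finset.sum_congr rfl fun ℓ' _ => ?_
    show (∑ m : {i // i ∉ A} → Bool, z (glue n A ℓ m) * star (z (glue n A ℓ' m))) *
        (∑ m' : {i // i ∉ A} → Bool, z (glue n A ℓ' m') * star (z (glue n A ℓ m'))) = _
    rw [Finset.sum_mul_sum]
  rw [lhs, Finset.sum_congr rfl fun k _ => step1 k, step2]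
  refine Finset.sum_congr rfl fun ℓ _ => ?_
  rw [Finset.sum_comm]
  refine Finset.sum_congr rfl fun ℓ' _ => Finset.sum_congr rfl fun m _ =>
    Finset.sum_congr rfl fun m' _ => by ring
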